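/- Let τ : X → Y be a d-sheeted topological covering of path-connected, locally path-connected spaces with monodromy group S_d, and let W → Y be the pullback covering given by the fiber product X ×_Y X with the diagonal removed. If W is connected, then the covering W → X has monodromy group S_{d−1}. -/

import Mathlib

/-- The (finite) covering `f : A → B` has full monodromy group over the basepoint `b`:
every permutation of the fiber `f ⁻¹ {b}` is realized by lifting some loop at `b`,
i.e. the image of `π₁(B, b)` in the symmetric group of the fiber is the whole
symmetric group. -/
def HasFullMonodromy {A B : Type} [TopologicalSpace A] [TopologicalSpace B]
    (f : A → B) (b : B) : Prop :=
  ∀ σ : Equiv.Perm (f ⁻¹' {b}), ∃ γ : Path b b,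
    ∀ x : f ⁻¹' {b}, ∃ p : Path (x : A) ((σ x : A)), ∀ t, f (p t) = γ t

/-- Let `τ : X → Y` be a `d`-sheeted covering of path-connected, locally path-connected
spaces whose monodromy group is the full symmetric group `S_d`, and let `W → X` be the
pullback covering `X ×_Y X` minus the diagonal (first projection).  If `W` is connected,
then the covering `W → X` has `(d-1)`-point fibers and monodromy group the full symmetric
group `S_{d-1}`. -/
theorem stmt_16 (X Y : Type) [TopologicalSpace X] [TopologicalSpace Y]
    [PathConnectedSpace X] [PathConnectedSpace Y]
    [LocallyPathConnectedSpace X] [LocallyPathConnectedSpace Y]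
    (τ : X → Y) (hτ : IsCoveringMap τ) (y : Y)
    (d : ℕ) (hd : Nat.card (τ ⁻¹' {y}) = d) (hd2 : 2 ≤ d)
    (hfull : HasFullMonodromy τ y)
    (W : Set (X × X)) (hW : W = {w : X × X | τ w.1 = τ w.2 ∧ w.1 ≠ w.2})
    (hconn : IsConnected W)
    (pr : W → X) (hpr : ∀ w : W, pr w = (w : X × X).1) :
    ∀ x₀ : X, τ x₀ = y →
      Nat.card (pr ⁻¹' {x₀}) = d - 1 ∧ HasFullMonodromy pr x₀ := by
  intro x₀ hx₀
  classical
  have hx₀F : x₀ ∈ τ ⁻¹' {y} := hx₀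
  set a₀ : τ ⁻¹' {y} := ⟨x₀, hx₀F⟩ with ha₀
  -- basic facts about elements of the fiber of pr
  have hfst : ∀ w : ↥(pr ⁻¹' {x₀}), ((w : W) : X × X).1 = x₀ := fun w => by
    rw [← hpr w]; exact w.2
  have hWmem : ∀ w : W, τ ((w : X × X).1) = τ ((w : X × X).2) ∧
      ((w : X × X)).1 ≠ ((w : X × X)).2 := fun w => hW.subset w.2
  have hsndF : ∀ w : ↥(pr ⁻¹' {x₀}), ((w : W) : X × X).2 ∈ τ ⁻¹' {y} := by
    intro w
    have h := (hWmem w).1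
    show τ _ = y
    rw [← h, hfst w, hx₀]
  have hsndne : ∀ w : ↥(pr ⁻¹' {x₀}),
      (⟨((w : W) : X × X).2, hsndF w⟩ : τ ⁻¹' {y}) ≠ a₀ := by
    intro w h
    apply (hWmem w).2
    rw [hfst w]
    have : ((w : W) : X × X).2 = x₀ := congrArg Subtype.val h
    rw [this]
  have hmemW : ∀ z : τ ⁻¹' {y}, z ≠ a₀ → ((x₀, (z : X)) : X × X) ∈ W := by
    intro z hz
    rw [hW]
    refine ⟨?_, ?_⟩
    · show τ x₀ = τ (z : X)
      rw [hx₀, z.2]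
    · intro h
      exact hz (Subtype.ext h.symm)
  have hmempr : ∀ z : τ ⁻¹' {y}, ∀ hz : z ≠ a₀,
      (⟨((x₀, (z : X)) : X × X), hmemW z hz⟩ : W) ∈ pr ⁻¹' {x₀} := by
    intro z hz
    show pr _ = x₀
    rw [hpr]
  -- the equivalence between the fiber of pr and the fiber of τ minus the basepoint
  let e : ↥(pr ⁻¹' {x₀}) ≃ {z : τ ⁻¹' {y} // z ≠ a₀} :=
    { toFun := fun w => ⟨⟨((w : W) : X × X).2, hsndF w⟩, hsndne w⟩
      invFun := fun z => ⟨⟨((x₀, (z : X)) : X × X), hmemW z z.2⟩, hmempr z z.2⟩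
      left_inv := by
        intro w
        apply Subtype.ext
        apply Subtype.ext
        exact Prod.ext (hfst w).symm rfl
      right_inv := by
        intro z
        apply Subtype.ext
        apply Subtype.ext
        rfl }
  constructor
  · -- cardinality
    have hfin : Finite ↥(τ ⁻¹' {y}) := by
      apply Nat.finite_of_card_ne_zero
      rw [hd]; omega
    have inst := Fintype.ofFinite (↥(τ ⁻¹' {y}))
    rw [Nat.card_congr e, Nat.card_eq_fintype_card, Fintype.card_subtype_compl,
      Fintype.card_subtype_eq, ← Nat.card_eq_fintype_card, hd]
  · -- full monodromy
    intro σ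
    -- extend σ to a permutation of the fiber of τ fixing a₀
    let σsub : Equiv.Perm {z : τ ⁻¹' {y} // z ≠ a₀} := e.permCongr σ
    let σ' : Equiv.Perm ↥(τ ⁻¹' {y}) := Equiv.Perm.ofSubtype σsub
    have hfix : σ' a₀ = a₀ :=
      Equiv.Perm.ofSubtype_apply_of_not_mem σsub (not_not_intro rfl)
    have happ : ∀ (z : τ ⁻¹' {y}) (hz : z ≠ a₀), σ' z = (σsub ⟨z, hz⟩ : _) :=
      fun z hz => Equiv.Perm.ofSubtype_apply_of_mem σsub hz
    obtain ⟨γ, hγ⟩ := hfull σ'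
    obtain ⟨p₀, hp₀⟩ := hγ a₀
    -- p₀ is a loop at x₀
    have htgt : ((σ' a₀ : τ ⁻¹' {y}) : X) = x₀ := by rw [hfix]
    refine ⟨⟨⟨p₀, p₀.continuous⟩, ?_, ?_⟩, ?_⟩
    · exact p₀.source
    · show p₀ 1 = x₀
      rw [p₀.target, htgt]
    intro w
    -- the lift of γ starting at the second coordinate of w
    obtain ⟨p, hp⟩ := hγ ⟨((w : W) : X × X).2, hsndF w⟩
    -- distinct lifts of the same path stay pointwise distinct
    have hdis : ∀ t, p₀ t ≠ p t := by
      intro t heq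
      have hcomp : τ ∘ p₀ = τ ∘ p := funext fun s => by
        show τ (p₀ s) = τ (p s)
        rw [hp₀ s, hp s]
      have hfun : (p₀ : unitInterval → X) = p :=
        hτ.eq_of_comp_eq p₀.continuous p.continuous hcomp t heq
      have h0 := congrFun hfun 0
      rw [p₀.source, p.source] at h0
      exact hsndne w (Subtype.ext h0.symm)
    have hτeq : ∀ t, τ (p₀ t) = τ (p t) := fun t => by rw [hp₀ t, hp t]
    have hmem : ∀ t, ((p₀ t, p t) : X × X) ∈ W := fun t =>
      hW.symm.subset ⟨hτeq t, hdis t⟩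
    -- identify the endpoint
    have hend : p 1 = ((σ w : W) : X × X).2 := by
      have h1 : σsub (e w) = e (σ w) := by
        show e (σ (e.symm (e w))) = e (σ w)
        rw [e.symm_apply_apply]
      have : σ' ⟨((w : W) : X × X).2, hsndF w⟩ = (e (σ w) : τ ⁻¹' {y}) := by
        rw [happ _ (hsndne w)]
        exact congrArg Subtype.val h1
      rw [p.target]
      exact congrArg Subtype.val this
    refine ⟨⟨⟨fun t => ⟨(p₀ t, p t), hmem t⟩, ?_⟩, ?_, ?_⟩, ?_⟩
    · exact (p₀.continuous.prodMk p.continuous).subtype_mk _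
    · apply Subtype.ext
      apply Prod.ext
      · show p₀ 0 = ((w : W) : X × X).1
        rw [p₀.source, hfst w]
      · show p 0 = ((w : W) : X × X).2
        rw [p.source]
    · apply Subtype.ext
      apply Prod.ext
      · show p₀ 1 = ((σ w : W) : X × X).1
        rw [p₀.target, htgt, hfst (σ w)]
      · show p 1 = ((σ w : W) : X × X).2
        exact hend
    · intro t
      rw [hpr]
      rfl
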